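/- Suppose b < d/(β(δ+1)) and R_0 < 1. Then for R_0 sufficiently close to 1 (equivalently, for ε = d(δ+1)/β − A sufficiently small and positive), the quadratic P(I) = δI² + c_1 I + c_0, with c_1 = b(δ+1) + δd/β − A and c_0 = (bd(δ+1)/β)(1 − R_0), has two distinct positive real roots. -/

import Mathlib

/-- If `b < d/(β(δ+1))`, then for `R₀` sufficiently close to `1` from below
(equivalently `ε = d(δ+1)/β − A` small and positive) the endemic-equilibrium
quadratic has two distinct positive real roots. -/
theorem two_positive_roots_backward
    (b d β δ : ℝ) (hb : 0 < b) (hd : 0 < d) (hβ : 0 < β) (hδ : 0 < δ)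
    (hbs : b < d / (β * (δ + 1))) :
    ∃ ε₀ > 0, ∀ A : ℝ, 0 < A →
      0 < d * (δ + 1) / β - A → d * (δ + 1) / β - A < ε₀ →
      ∃ I₁ I₂ : ℝ, 0 < I₁ ∧ 0 < I₂ ∧ I₁ ≠ I₂ ∧
        δ * I₁ ^ 2 + (b * (δ + 1) + δ * d / β - A) * I₁
          + (b * d * (δ + 1) / β) * (1 - β * A / (d * (δ + 1))) = 0 ∧
        δ * I₂ ^ 2 + (b * (δ + 1) + δ * d / β - A) * I₂
          + (b * d * (δ + 1) / β) * (1 - β * A / (d * (δ + 1))) = 0 := by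
  have hβ' : β ≠ 0 := ne_of_gt hβ
  have hδ1 : (0:ℝ) < δ + 1 := by linarith
  have hdδ : d * (δ + 1) ≠ 0 := by positivity
  obtain ⟨m, hmdef⟩ : ∃ m : ℝ, m = d / β - b * (δ + 1) := ⟨_, rfl⟩
  have hm : 0 < m := by
    rw [div_mul_eq_div_div] at hbs
    have h1 : b * (δ + 1) < d / β := (lt_div_iff₀ hδ1).mp hbs
    linarith [hmdef.ge, hmdef.le]
  refine ⟨min (m/2) (m^2/(16*δ*b)), by positivity, ?_⟩
  intro A hA hε1 hε2
  obtain ⟨E, hEdef⟩ : ∃ E : ℝ, E = d * (δ + 1) / β - A := ⟨_, rfl⟩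
  rw [← hEdef] at hε1 hε2
  have hεm : E < m / 2 := lt_of_lt_of_le hε2 (min_le_left _ _)
  have hεb : E < m ^ 2 / (16 * δ * b) := lt_of_lt_of_le hε2 (min_le_right _ _)
  have hc1 : b * (δ + 1) + δ * d / β - A = E - m := by
    rw [hEdef, hmdef]; field_simp; ring
  have hc0 : (b * d * (δ + 1) / β) * (1 - β * A / (d * (δ + 1))) = b * E := by
    rw [hEdef]; field_simp
  have hmE : 0 < m - E := by linarith
  have hdp : (0:ℝ) < (m - E) ^ 2 - 4 * δ * (b * E) := by
    have h2 : (m / 2) ^ 2 < (m - E) ^ 2 := by nlinarith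
    have h3 : E * (16 * δ * b) < m ^ 2 :=
      (lt_div_iff₀ (by positivity)).mp hεb
    nlinarith
  set s : ℝ := Real.sqrt ((m - E) ^ 2 - 4 * δ * (b * E)) with hs
  have hs2 : s ^ 2 = (m - E) ^ 2 - 4 * δ * (b * E) := Real.sq_sqrt hdp.le
  have hsp : 0 < s := Real.sqrt_pos.mpr hdp
  have hsm : s < m - E := by
    have h1 : (m - E) ^ 2 - 4 * δ * (b * E) < (m - E) ^ 2 := by
      have h4 : 0 < 4 * δ * (b * E) := by positivity
      linarith
    calc s < Real.sqrt ((m - E) ^ 2) := Real.sqrt_lt_sqrt hdp.le h1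
    _ = m - E := Real.sqrt_sq hmE.le
  have h2δ : (0:ℝ) < 2 * δ := by positivity
  refine ⟨(m - E + s) / (2 * δ), (m - E - s) / (2 * δ),
    div_pos (by linarith) h2δ, div_pos (by linarith) h2δ, ?_, ?_, ?_⟩
  · have : (m - E - s) / (2 * δ) < (m - E + s) / (2 * δ) :=
      (div_lt_div_iff_of_pos_right h2δ).mpr (by linarith)
    exact ne_of_gt this
  · rw [hc1, hc0]
    field_simp
    linear_combination hs2
  · rw [hc1, hc0]
    field_simp
    linear_combination hs2
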